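/- arXiv:2502.10353 — 3 statements merged into one kernel-verified Lean document; each statement's English description precedes it below -/
import Mathlib

section
/- With one provider (M=1) and patients ordered so θ_{u_1} ≥ θ_{u_2} ≥ … ≥ θ_{u_N}, the assortment maximizing expected match quality offers the provider exactly to the top s patients u_1,…,u_s, where s = argmax_s (1-(1-p)^s) · (Σ_{i=1}^s θ_{u_i})/s; and the assortment maximizing match rate offers the provider to all N patients. -/
open Finset

/-! Any `k` patients have total `θ` at most that of the top `k`: listing a set in increasing
rank order, its `j`-th element has rank at least `j`. Since `1 - (1-p)^k ≥ 0`, the quality of an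
assortment of size `k` is therefore bounded by that of the top `k`, which the choice of `s`
bounds by that of the top `s`. The match rate `1 - (1-p)^k` is monotone in `k`, so it is
largest for `k = N`. -/

theorem Fin.le_val_of_strictMono {k N : ℕ} {g : Fin k → Fin N} (hg : StrictMono g) (i : Fin k) :
    (i : ℕ) ≤ g i :=
  calc (i : ℕ) = #(Iio i) := (Fin.card_Iio i).symm
    _ ≤ #(Iio (g i)) :=
      card_le_card_of_injOn g (fun _ hj => by simpa using hg (by simpa using hj))
        hg.injective.injOn
    _ = g i := Fin.card_Iio (g i)

section TopSum

variable {M : Type*} [AddCommMonoid M] [PartialOrder M] [IsOrderedAddMonoid M] {N : ℕ}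

theorem Antitone.sum_le_sum_castLE {f : Fin N → M} (hf : Antitone f) {T : Finset (Fin N)}
    {k : ℕ} (hT : #T = k) (hk : k ≤ N) :
    ∑ i ∈ T, f i ≤ ∑ j : Fin k, f (Fin.castLE hk j) := by
  subst hT
  calc ∑ i ∈ T, f i = ∑ j, f (T.orderEmbOfFin rfl j) := by
        conv_lhs => rw [← T.image_orderEmbOfFin_univ rfl]
        exact sum_image fun _ _ _ _ h => (T.orderEmbOfFin rfl).injective h
    _ ≤ _ := sum_le_sum fun j _ =>
        hf (Fin.le_val_of_strictMono (T.orderEmbOfFin rfl).strictMono j)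

theorem sum_le_sum_castLE_of_antitone_comp {α : Type*} {f : α → M} {u : Fin N ≃ α}
    (hu : Antitone fun t => f (u t)) (S : Finset α) (hS : #S ≤ N) :
    ∑ i ∈ S, f i ≤ ∑ j : Fin #S, f (u (Fin.castLE hS j)) :=
  calc ∑ i ∈ S, f i = ∑ t ∈ S.map u.symm.toEmbedding, f (u t) := by simp [sum_map]
    _ ≤ _ := hu.sum_le_sum_castLE (card_map _) hS

end TopSum

theorem single_provider_optimal_assortment_general (N : ℕ) (p : ℝ)
    (hp0 : 0 < p) (hp1 : p ≤ 1) (θ : Fin N → ℝ)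
    (u : Equiv.Perm (Fin N)) (hu : Antitone fun t => θ (u t))
    (s : ℕ) (hsN : s ≤ N)
    (hopt : ∀ (s' : ℕ) (hs'1 : 1 ≤ s') (hs'N : s' ≤ N),
      (1 - (1 - p) ^ s') * ((∑ t : Fin s', θ (u (Fin.castLE hs'N t))) / s')
        ≤ (1 - (1 - p) ^ s) * ((∑ t : Fin s, θ (u (Fin.castLE hsN t))) / s)) :
    (∀ S : Finset (Fin N), S.Nonempty →
        (1 - (1 - p) ^ S.card) * ((∑ i ∈ S, θ i) / S.card)
          ≤ (1 - (1 - p) ^ s) * ((∑ t : Fin s, θ (u (Fin.castLE hsN t))) / s))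
    ∧ (∀ S : Finset (Fin N),
        1 - (1 - p) ^ S.card ≤ 1 - (1 - p) ^ (Finset.univ : Finset (Fin N)).card) := by
  have hq0 : 0 ≤ 1 - p := by linarith
  have hq1 : 1 - p ≤ 1 := by linarith
  refine ⟨fun S hS => ?_, fun S => ?_⟩
  · have hSN : #S ≤ N := (card_le_univ S).trans_eq (Fintype.card_fin N)
    calc (1 - (1 - p) ^ #S) * ((∑ i ∈ S, θ i) / #S)
        ≤ (1 - (1 - p) ^ #S) * ((∑ t : Fin #S, θ (u (Fin.castLE hSN t))) / #S) := by
          gcongr ?_ * (?_ / _)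
          · exact sub_nonneg.2 (pow_le_one₀ hq0 hq1)
          · exact sum_le_sum_castLE_of_antitone_comp hu S hSN
      _ ≤ _ := hopt #S (card_pos.2 hS) hSN
  · exact sub_le_sub_left (pow_le_pow_of_le_one hq0 hq1 (card_le_card (subset_univ S))) 1

/-- Single-provider (`M = 1`) setting under the uniform choice model with acceptance
probability `p ∈ (0,1]`.  Patients are sorted by the permutation `u` so that
`θ (u 0) ≥ θ (u 1) ≥ …` (the hypothesis `hu`).  Offering the provider to a set `S`
yields match rate `1 - (1-p)^|S|` and expected match quality
`(1 - (1-p)^|S|) · (∑_{i∈S} θ i)/|S|`.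

If `s` maximizes `(1-(1-p)^{s'}) · (∑_{t<s'} θ (u t))/s'` over `1 ≤ s' ≤ N`, then
(i) offering the provider exactly to the top `s` patients `u 0, …, u (s-1)` maximizes
expected match quality over all (nonempty) assortments, and
(ii) offering the provider to all `N` patients maximizes the match rate. -/
theorem single_provider_optimal_assortment (N : ℕ) (hN : 0 < N) (p : ℝ)
    (hp0 : 0 < p) (hp1 : p ≤ 1) (θ : Fin N → ℝ) (hθ : ∀ i, θ i ∈ Set.Icc (0 : ℝ) 1)
    (u : Equiv.Perm (Fin N)) (hu : Antitone fun t => θ (u t))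
    (s : ℕ) (hs1 : 1 ≤ s) (hsN : s ≤ N)
    (hopt : ∀ (s' : ℕ) (hs'1 : 1 ≤ s') (hs'N : s' ≤ N),
      (1 - (1 - p) ^ s') * ((∑ t : Fin s', θ (u (Fin.castLE hs'N t))) / s')
        ≤ (1 - (1 - p) ^ s) * ((∑ t : Fin s, θ (u (Fin.castLE hsN t))) / s)) :
    (∀ S : Finset (Fin N), S.Nonempty →
        (1 - (1 - p) ^ S.card) * ((∑ i ∈ S, θ i) / S.card)
          ≤ (1 - (1 - p) ^ s) * ((∑ t : Fin s, θ (u (Fin.castLE hsN t))) / s))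
    ∧ (∀ S : Finset (Fin N),
        1 - (1 - p) ^ S.card ≤ 1 - (1 - p) ^ (Finset.univ : Finset (Fin N)).card) :=
  single_provider_optimal_assortment_general N p hp0 hp1 θ u hu s hsN hopt
end

section
/- Under the uniform choice model, no assortment policy achieves a strictly greater match rate than the greedy policy that offers every provider to every patient. -/
open Finset

noncomputable section
open scoped Classical

/-- Most preferred (highest quality) provider in `S`, ties broken by least index. -/
def pick {M : ℕ} (q : Fin M → ℝ) (S : Finset (Fin M)) : Option (Fin M) :=
  if h : S.Nonempty then
    some ((S.filter fun j => ∀ k ∈ S, q k ≤ q j).min' (by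
      obtain ⟨j, hj, hmax⟩ := S.exists_max_image q h
      exact ⟨j, Finset.mem_filter.2 ⟨hj, hmax⟩⟩))
  else none

/-- State (available providers, matches so far) of the sequential matching process
after the first `t` patients (in the order `σ`) have responded.  Patient `i` accepts
their most preferred offered available provider iff the coin `c i` comes up true. -/
def runProc (N M : ℕ) (θ : Fin N → Fin M → ℝ) (X : Fin N → Fin M → Bool)
    (σ : Equiv.Perm (Fin N)) (c : Fin N → Bool) :
    ℕ → Finset (Fin M) × (Fin N → Option (Fin M))
  | 0 => (Finset.univ, fun _ => none)
  | t + 1 =>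
    let st := runProc N M θ X σ c t
    if ht : t < N then
      let i := σ ⟨t, ht⟩
      if c i then
        match pick (θ i) (st.1.filter fun j => X i j) with
        | some j => (st.1.erase j, Function.update st.2 i (some j))
        | none => st
      else st
    else st

/-- The realized matches of the process. -/
def matchesOf (N M : ℕ) (θ : Fin N → Fin M → ℝ) (X : Fin N → Fin M → Bool)
    (σ : Equiv.Perm (Fin N)) (c : Fin N → Bool) : Fin N → Option (Fin M) :=
  (runProc N M θ X σ c N).2

/-- Probability weight of a coin-flip outcome (each coin independently true w.p. `p`). -/
def coinWt (N : ℕ) (p : ℝ) (c : Fin N → Bool) : ℝ :=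
  ∏ i, if c i then p else 1 - p

/-- Match rate: expected fraction of matched patients, over a uniformly random
response order and independent acceptance coins of bias `p`. -/
def MR (N M : ℕ) (p : ℝ) (θ : Fin N → Fin M → ℝ) (X : Fin N → Fin M → Bool) : ℝ :=
  (1 / (N.factorial : ℝ)) * ∑ σ : Equiv.Perm (Fin N), ∑ c : Fin N → Bool,
    coinWt N p c *
      (((Finset.univ.filter fun i => (matchesOf N M θ X σ c i).isSome).card : ℝ) / N)

def qualOf {N M : ℕ} (θ : Fin N → Fin M → ℝ) (m : Fin N → Option (Fin M)) (i : Fin N) : ℝ :=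
  match m i with
  | some j => θ i j
  | none => 0

/-- Match quality: expected average `θ`-value over realized matches. -/
def MQ (N M : ℕ) (p : ℝ) (θ : Fin N → Fin M → ℝ) (X : Fin N → Fin M → Bool) : ℝ :=
  (1 / (N.factorial : ℝ)) * ∑ σ : Equiv.Perm (Fin N), ∑ c : Fin N → Bool,
    coinWt N p c * ((1 / (N : ℝ)) * ∑ i, qualOf θ (matchesOf N M θ X σ c) i)

/-- Assortments are disjoint singletons: each patient offered at most one provider,
each provider offered to at most one patient. -/
def IsPairwise (N M : ℕ) (X : Fin N → Fin M → Bool) : Prop :=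
  (∀ i, (Finset.univ.filter fun j => X i j).card ≤ 1) ∧
  (∀ j, (Finset.univ.filter fun i => X i j).card ≤ 1)

/-- Total θ-weight of the pairs selected by a 0-1 matrix. -/
def weightOf (N M : ℕ) (θ : Fin N → Fin M → ℝ) (X : Fin N → Fin M → Bool) : ℝ :=
  ∑ i, ∑ j, if X i j then θ i j else 0


lemma pick_mem {M : ℕ} {q : Fin M → ℝ} {S : Finset (Fin M)} {j : Fin M}
    (h : pick q S = some j) : j ∈ S := by
  unfold pick at h
  split_ifs at h with hS
  simp only [Option.some.injEq] at h
  subst h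
  exact (Finset.mem_filter.1 (Finset.min'_mem _ _)).1

lemma pick_isSome {M : ℕ} {q : Fin M → ℝ} {S : Finset (Fin M)} (h : S.Nonempty) :
    ∃ j, pick q S = some j := by
  unfold pick
  rw [dif_pos h]
  exact ⟨_, rfl⟩

section Aux

variable (N M : ℕ) (θ : Fin N → Fin M → ℝ) (X : Fin N → Fin M → Bool)
  (σ : Equiv.Perm (Fin N)) (c : Fin N → Bool)

lemma runProc_succ_not {t : ℕ} (ht : ¬ t < N) :
    runProc N M θ X σ c (t + 1) = runProc N M θ X σ c t := by
  rw [runProc]; simp only [dif_neg ht]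

lemma runProc_succ_false {t : ℕ} (ht : t < N) (hc : ¬ c (σ ⟨t, ht⟩) = true) :
    runProc N M θ X σ c (t + 1) = runProc N M θ X σ c t := by
  rw [runProc]; simp only [dif_pos ht, if_neg hc]

lemma runProc_succ_none {t : ℕ} (ht : t < N) (hc : c (σ ⟨t, ht⟩) = true)
    (hp : pick (θ (σ ⟨t, ht⟩))
      ((runProc N M θ X σ c t).1.filter fun j => X (σ ⟨t, ht⟩) j) = none) :
    runProc N M θ X σ c (t + 1) = runProc N M θ X σ c t := by
  rw [runProc]; simp only [dif_pos ht, if_pos hc, hp]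

lemma runProc_succ_some {t : ℕ} {j : Fin M} (ht : t < N) (hc : c (σ ⟨t, ht⟩) = true)
    (hp : pick (θ (σ ⟨t, ht⟩))
      ((runProc N M θ X σ c t).1.filter fun j => X (σ ⟨t, ht⟩) j) = some j) :
    runProc N M θ X σ c (t + 1) =
      ((runProc N M θ X σ c t).1.erase j,
        Function.update (runProc N M θ X σ c t).2 (σ ⟨t, ht⟩) (some j)) := by
  rw [runProc]; simp only [dif_pos ht, if_pos hc, hp]

/-- number matched after t steps -/
def Fc (t : ℕ) : ℕ :=
  (Finset.univ.filter fun i => ((runProc N M θ X σ c t).2 i).isSome).card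

lemma matched_origin : ∀ t i, (runProc N M θ X σ c t).2 i ≠ none →
    ∃ s : ℕ, ∃ hs : s < N, s < t ∧ σ ⟨s, hs⟩ = i := by
  intro t
  induction t with
  | zero => intro i hi; exact absurd rfl hi
  | succ t ih =>
    intro i hi
    have step : ∀ (h : (runProc N M θ X σ c t).2 i ≠ none), _ := fun h => ih i h
    by_cases ht : t < N
    · by_cases hc : c (σ ⟨t, ht⟩) = true
      · rcases hp : pick (θ (σ ⟨t, ht⟩)) ((runProc N M θ X σ c t).1.filter
            fun j => X (σ ⟨t, ht⟩) j) with _ | j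
        · rw [runProc_succ_none N M θ X σ c ht hc hp] at hi
          obtain ⟨s, hs, hst, hsi⟩ := ih i hi
          exact ⟨s, hs, Nat.lt_succ_of_lt hst, hsi⟩
        · rw [runProc_succ_some N M θ X σ c ht hc hp] at hi
          simp only [Function.update] at hi
          by_cases hii : i = σ ⟨t, ht⟩
          · exact ⟨t, ht, Nat.lt_succ_self t, hii.symm⟩
          · rw [dif_neg hii] at hi
            obtain ⟨s, hs, hst, hsi⟩ := ih i hi
            exact ⟨s, hs, Nat.lt_succ_of_lt hst, hsi⟩
      · rw [runProc_succ_false N M θ X σ c ht hc] at hi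
        obtain ⟨s, hs, hst, hsi⟩ := ih i hi
        exact ⟨s, hs, Nat.lt_succ_of_lt hst, hsi⟩
    · rw [runProc_succ_not N M θ X σ c ht] at hi
      obtain ⟨s, hs, hst, hsi⟩ := ih i hi
      exact ⟨s, hs, Nat.lt_succ_of_lt hst, hsi⟩

lemma matched_none (t : ℕ) (ht : t < N) :
    (runProc N M θ X σ c t).2 (σ ⟨t, ht⟩) = none := by
  by_contra h
  obtain ⟨s, hs, hst, hsi⟩ := matched_origin N M θ X σ c t _ h
  have h2 : s = t := congrArg Fin.val (σ.injective hsi)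
  omega

lemma card_filter_update {m : Fin N → Option (Fin M)} {i : Fin N} (j : Fin M)
    (hm : m i = none) :
    (Finset.univ.filter fun i' => (Function.update m i (some j) i').isSome).card
      = (Finset.univ.filter fun i' => (m i').isSome).card + 1 := by
  have hset : (Finset.univ.filter fun i' => (Function.update m i (some j) i').isSome)
      = insert i (Finset.univ.filter fun i' => (m i').isSome) := by
    ext i'
    simp only [Finset.mem_filter, Finset.mem_univ, true_and, Finset.mem_insert]
    by_cases h : i' = i
    · subst h; simp [Function.update_self]
    · simp [Function.update_of_ne h, h]
  rw [hset, Finset.card_insert_of_notMem (by simp [hm])]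

lemma card_avail (t : ℕ) :
    (runProc N M θ X σ c t).1.card + Fc N M θ X σ c t = M := by
  induction t with
  | zero => simp [runProc, Fc]
  | succ t ih =>
    unfold Fc at ih ⊢
    by_cases ht : t < N
    · by_cases hc : c (σ ⟨t, ht⟩) = true
      · rcases hp : pick (θ (σ ⟨t, ht⟩)) ((runProc N M θ X σ c t).1.filter
            fun j => X (σ ⟨t, ht⟩) j) with _ | j
        · rw [runProc_succ_none N M θ X σ c ht hc hp]; exact ih
        · rw [runProc_succ_some N M θ X σ c ht hc hp]
          have hjmem : j ∈ (runProc N M θ X σ c t).1 :=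
            (Finset.mem_filter.1 (pick_mem hp)).1
          have hcard : ((runProc N M θ X σ c t).1.erase j).card
              = (runProc N M θ X σ c t).1.card - 1 :=
            Finset.card_erase_of_mem hjmem
          have hpos : 1 ≤ (runProc N M θ X σ c t).1.card :=
            Finset.card_pos.2 ⟨j, hjmem⟩
          have hupd := card_filter_update N M (m := (runProc N M θ X σ c t).2)
            (i := σ ⟨t, ht⟩) j (matched_none N M θ X σ c t ht)
          simp only [hcard, hupd]
          omega
      · rw [runProc_succ_false N M θ X σ c ht hc]; exact ih
    · rw [runProc_succ_not N M θ X σ c ht]; exact ih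

lemma Fc_le_M (t : ℕ) : Fc N M θ X σ c t ≤ M := by
  have := card_avail N M θ X σ c t
  omega

lemma Fc_mono (t : ℕ) : Fc N M θ X σ c t ≤ Fc N M θ X σ c (t + 1) := by
  unfold Fc
  by_cases ht : t < N
  · by_cases hc : c (σ ⟨t, ht⟩) = true
    · rcases hp : pick (θ (σ ⟨t, ht⟩)) ((runProc N M θ X σ c t).1.filter
          fun j => X (σ ⟨t, ht⟩) j) with _ | j
      · rw [runProc_succ_none N M θ X σ c ht hc hp]
      · rw [runProc_succ_some N M θ X σ c ht hc hp]
        rw [card_filter_update N M (m := (runProc N M θ X σ c t).2)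
          (i := σ ⟨t, ht⟩) j (matched_none N M θ X σ c t ht)]
        omega
    · rw [runProc_succ_false N M θ X σ c ht hc]
  · rw [runProc_succ_not N M θ X σ c ht]

end Aux

lemma Fc_le_greedy (N M : ℕ) (θ : Fin N → Fin M → ℝ) (X : Fin N → Fin M → Bool)
    (σ : Equiv.Perm (Fin N)) (c : Fin N → Bool) (t : ℕ) :
    Fc N M θ X σ c t ≤ Fc N M θ (fun _ _ => true) σ c t := by
  induction t with
  | zero => exact le_rfl
  | succ t ih =>
    have hGmono := Fc_mono N M θ (fun _ _ => true) σ c t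
    have hXstep : Fc N M θ X σ c (t+1) = Fc N M θ X σ c t ∨
        (Fc N M θ X σ c (t+1) = Fc N M θ X σ c t + 1 ∧
          ∃ ht : t < N, c (σ ⟨t, ht⟩) = true) := by
      by_cases ht : t < N
      · by_cases hc : c (σ ⟨t, ht⟩) = true
        · rcases hp : pick (θ (σ ⟨t, ht⟩)) ((runProc N M θ X σ c t).1.filter
              fun j => X (σ ⟨t, ht⟩) j) with _ | j
          · left; unfold Fc; rw [runProc_succ_none N M θ X σ c ht hc hp]
          · refine Or.inr ⟨?_, ht, hc⟩
            unfold Fc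
            rw [runProc_succ_some N M θ X σ c ht hc hp]
            exact card_filter_update N M (m := (runProc N M θ X σ c t).2)
              (i := σ ⟨t, ht⟩) j (matched_none N M θ X σ c t ht)
        · left; unfold Fc; rw [runProc_succ_false N M θ X σ c ht hc]
      · left; unfold Fc; rw [runProc_succ_not N M θ X σ c ht]
    rcases hXstep with h | ⟨h, ht, hc⟩
    · omega
    · by_cases hG : ((runProc N M θ (fun _ _ => true) σ c t).1).Nonempty
      · have hfilter : ((runProc N M θ (fun _ _ => true) σ c t).1.filter
            fun j => (fun (_ : Fin N) (_ : Fin M) => true) (σ ⟨t, ht⟩) j)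
            = (runProc N M θ (fun _ _ => true) σ c t).1 := by
          simp
        obtain ⟨j, hj⟩ := pick_isSome (q := θ (σ ⟨t, ht⟩)) (hfilter ▸ hG)
        have hGstep : Fc N M θ (fun _ _ => true) σ c (t+1)
            = Fc N M θ (fun _ _ => true) σ c t + 1 := by
          unfold Fc
          rw [runProc_succ_some N M θ (fun _ _ => true) σ c ht hc hj]
          exact card_filter_update N M
            (m := (runProc N M θ (fun _ _ => true) σ c t).2)
            (i := σ ⟨t, ht⟩) j (matched_none N M θ (fun _ _ => true) σ c t ht)
        omega
      · have hempty : (runProc N M θ (fun _ _ => true) σ c t).1.card = 0 := by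
          simp [Finset.not_nonempty_iff_eq_empty.1 hG]
        have hGfull : Fc N M θ (fun _ _ => true) σ c t = M := by
          have := card_avail N M θ (fun _ _ => true) σ c t
          omega
        have hle := Fc_le_M N M θ X σ c (t+1)
        omega

lemma coinWt_nonneg (N : ℕ) (p : ℝ) (hp0 : 0 ≤ p) (hp1 : p ≤ 1) (c : Fin N → Bool) :
    0 ≤ coinWt N p c := by
  unfold coinWt
  apply Finset.prod_nonneg
  intro i _
  by_cases h : c i <;> simp [h] <;> linarith


/-- Under the uniform choice model, no assortment policy achieves a strictly greater
match rate than the greedy policy offering every provider to every patient. -/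
theorem greedy_maximizes_match_rate (N M : ℕ) (hN : 0 < N) (p : ℝ)
    (hp0 : 0 ≤ p) (hp1 : p ≤ 1) (θ : Fin N → Fin M → ℝ) (X : Fin N → Fin M → Bool) :
    MR N M p θ X ≤ MR N M p θ (fun _ _ => true) := by
  unfold MR
  apply mul_le_mul_of_nonneg_left _ (by positivity)
  apply Finset.sum_le_sum
  intro σ _
  apply Finset.sum_le_sum
  intro c _
  apply mul_le_mul_of_nonneg_left _ (coinWt_nonneg N p hp0 hp1 c)
  have key : ((Finset.univ.filter fun i => (matchesOf N M θ X σ c i).isSome).card : ℝ)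
      ≤ ((Finset.univ.filter fun i =>
          (matchesOf N M θ (fun _ _ => true) σ c i).isSome).card : ℝ) := by
    exact_mod_cast Fc_le_greedy N M θ X σ c N
  apply div_le_div_of_nonneg_right key -- maybe wrong name
  exact_mod_cast Nat.zero_le N


end
end

section
/- For every p ∈ (0,1] and every ε > 0, there exist N, M and a match quality matrix θ ∈ [0,1]^{N×M} such that the greedy policy (offering all providers to all patients) attains expected match quality at most ε times that of the optimal match-quality policy. In particular, one can take N = M, θ_{1,1}=1, θ_{i,1}=2Δ for i≠1, and θ_{i,j}=Δ for j≠1, with N = 3/(εp) and Δ = min(ε/(3N), pε/6). -/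
open Finset

noncomputable section
open scoped Classical

/-! Take one provider, valuable (θ = 1) only to patient 0. Offering it to patient 0 alone
matches them with probability `p`, so the optimum is at least `p / N`. Under greedy the provider
goes to the first accepting patient in the response order, and that is patient 0 with probability
`∑ j < N, p (1 - p) ^ j / N ≤ 1 / N`; so greedy's match quality is at most `1 / N ^ 2`, which is
below `ε p / N` once `N ≥ 1 / (ε p)`. -/

lemma sum_coinWt_mul_indicator {N : ℕ} (p : ℝ) {i₀ : Fin N} {B : Finset (Fin N)}
    (hB : i₀ ∉ B) :
    ∑ c : Fin N → Bool, coinWt N p c * (if c i₀ = true ∧ ∀ i ∈ B, c i = false then 1 else 0) =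
      p * (1 - p) ^ #B := by
  let g : Fin N → Bool → ℝ := fun i b =>
    if (i = i₀ → b = true) ∧ (i ∈ B → b = false) then 1 else 0
  have hg : ∀ c : Fin N → Bool,
      (if c i₀ = true ∧ ∀ i ∈ B, c i = false then (1 : ℝ) else 0) = ∏ i, g i (c i) := by
    intro c
    simp only [g, prod_boole, mem_univ, true_imp_iff]
    refine if_congr ⟨fun h i => ⟨fun hi => hi ▸ h.1, h.2 i⟩,
      fun h => ⟨(h i₀).1 rfl, fun i hi => (h i).2 hi⟩⟩ rfl rfl
  have hfactor : ∀ i, ∑ b : Bool, (if b then p else 1 - p) * g i b =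
      (if i = i₀ then p else 1) * (if i ∈ B then 1 - p else 1) := by
    intro i
    by_cases h₀ : i = i₀
    · subst h₀; simp [g, hB]
    · by_cases h₁ : i ∈ B <;> simp [g, h₀, h₁]
  simp_rw [hg, coinWt, ← prod_mul_distrib]
  rw [← Fintype.prod_sum fun i b => (if b then p else 1 - p) * g i b,
    prod_congr rfl fun i _ => hfactor i, prod_mul_distrib, prod_ite_eq', prod_ite_mem,
    univ_inter, prod_const]
  simp

lemma mul_sum_one_sub_pow_le_one {p : ℝ} (hp1 : p ≤ 1) (N : ℕ) :
    p * ∑ j : Fin N, (1 - p) ^ (j : ℕ) ≤ 1 := by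
  have h := mul_neg_geom_sum (1 - p) N
  rw [sub_sub_cancel] at h
  rw [Fin.sum_univ_eq_sum_range (fun j => (1 - p) ^ j), h]
  linarith [pow_nonneg (sub_nonneg.2 hp1) N]

lemma sum_perm_symm_apply_zero {n : ℕ} (f : Fin (n + 1) → ℝ) :
    ∑ σ : Equiv.Perm (Fin (n + 1)), f (σ.symm 0) = n.factorial * ∑ j, f j := by
  rw [show ∑ σ : Equiv.Perm (Fin (n + 1)), f (σ.symm 0) = ∑ σ : Equiv.Perm (Fin (n + 1)), f (σ 0)
      from Equiv.sum_comp (Equiv.inv _) fun σ : Equiv.Perm (Fin (n + 1)) => f (σ 0),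
    ← Equiv.Perm.decomposeFin.symm.sum_comp, Fintype.sum_prod_type]
  simp [mul_sum, Fintype.card_perm]

lemma forall_fin_lt_succ_iff {N : ℕ} {P : Fin N → Prop} {s : ℕ} (hs : s < N) :
    (∀ t : Fin N, (t : ℕ) < s + 1 → P t) ↔ (∀ t : Fin N, (t : ℕ) < s → P t) ∧ P ⟨s, hs⟩ := by
  refine ⟨fun h => ⟨fun t ht => h t (by omega), h _ (by simp)⟩, fun ⟨h, hs⟩ t ht => ?_⟩
  rcases Nat.lt_succ_iff_lt_or_eq.1 ht with ht | ht
  · exact h t ht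
  · exact (Fin.ext ht : t = ⟨s, _⟩) ▸ hs

lemma pick_fin_one (q : Fin 1 → ℝ) (S : Finset (Fin 1)) :
    pick q S = if 0 ∈ S then some 0 else none := by
  unfold pick
  split_ifs <;> simp_all [Fin.fin_one_eq_zero, Finset.Nonempty]

section OneProvider

variable {N : ℕ} (θ : Fin N → Fin 1 → ℝ) (X : Fin N → Fin 1 → Bool)
  (σ : Equiv.Perm (Fin N)) (c : Fin N → Bool)

lemma runProc_succ_one_provider {s : ℕ} (hs : s < N) :
    runProc N 1 θ X σ c (s + 1) =
      if c (σ ⟨s, hs⟩) = true ∧ X (σ ⟨s, hs⟩) 0 = true ∧ 0 ∈ (runProc N 1 θ X σ c s).1 then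
        ((runProc N 1 θ X σ c s).1.erase 0,
          Function.update (runProc N 1 θ X σ c s).2 (σ ⟨s, hs⟩) (some 0))
      else runProc N 1 θ X σ c s := by
  simp only [runProc, dif_pos hs, pick_fin_one, mem_filter]
  by_cases hc : c (σ ⟨s, hs⟩) = true <;> by_cases hX : X (σ ⟨s, hs⟩) 0 = true <;>
    simp only [hc, hX, Bool.false_eq_true, true_and, and_true, false_and, and_false, if_true,
      if_false]
  split_ifs <;> rfl

lemma mem_runProc_one_provider (s : ℕ) :
    0 ∈ (runProc N 1 θ X σ c s).1 ↔
      ∀ t : Fin N, (t : ℕ) < s → ¬ (c (σ t) = true ∧ X (σ t) 0 = true) := by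
  induction s with
  | zero => simp [runProc]
  | succ s ih =>
    by_cases hs : s < N
    · rw [runProc_succ_one_provider θ X σ c hs, forall_fin_lt_succ_iff hs, ← ih]
      split_ifs with h
      · simp [h.1, h.2.1]
      · tauto
    · simp only [runProc, dif_neg hs, ih]
      exact ⟨fun h t ht => h t (by omega), fun h t ht => h t (by omega)⟩

lemma isSome_runProc_one_provider (s : ℕ) (i : Fin N) :
    ((runProc N 1 θ X σ c s).2 i).isSome ↔
      (σ.symm i : ℕ) < s ∧ c i = true ∧ X i 0 = true ∧
        ∀ t : Fin N, t < σ.symm i → ¬ (c (σ t) = true ∧ X (σ t) 0 = true) := by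
  induction s with
  | zero => simp [runProc]
  | succ s ih =>
    by_cases hs : s < N
    · rw [runProc_succ_one_provider θ X σ c hs]
      have hturn : (σ.symm i : ℕ) = s ↔ i = σ ⟨s, hs⟩ := by
        rw [← Equiv.symm_apply_eq, Fin.ext_iff]
      split_ifs with h
      · by_cases hi : i = σ ⟨s, hs⟩
        · subst hi
          simp only [Function.update_self, Option.isSome_some, true_iff, Equiv.symm_apply_apply]
          exact ⟨by simp, h.1, h.2.1, (mem_runProc_one_provider θ X σ c s).1 h.2.2⟩
        · simp only [Function.update_of_ne hi, ih]
          have := mt hturn.1 hi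
          constructor <;> rintro ⟨h₁, h₂⟩ <;> exact ⟨by omega, h₂⟩
      · rw [ih]
        refine ⟨fun ⟨h₁, h₂⟩ => ⟨by omega, h₂⟩, fun ⟨h₁, h₂⟩ => ⟨?_, h₂⟩⟩
        rcases Nat.lt_succ_iff_lt_or_eq.1 h₁ with h₁ | h₁
        · exact h₁
        · obtain rfl := hturn.1 h₁
          rw [Equiv.symm_apply_apply] at h₂
          exact absurd ⟨h₂.1, h₂.2.1, (mem_runProc_one_provider θ X σ c s).2 h₂.2.2⟩ h
    · simp only [runProc, dif_neg hs, ih]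
      have := (σ.symm i).isLt
      constructor <;> rintro ⟨h, h'⟩ <;> exact ⟨by omega, h'⟩

lemma isSome_matchesOf_one_provider (i : Fin N) :
    (matchesOf N 1 θ X σ c i).isSome ↔
      c i = true ∧ X i 0 = true ∧
        ∀ t : Fin N, t < σ.symm i → ¬ (c (σ t) = true ∧ X (σ t) 0 = true) := by
  simp [matchesOf, isSome_runProc_one_provider]

lemma qualOf_fin_one (m : Fin N → Option (Fin 1)) (i : Fin N) :
    qualOf θ m i = if (m i).isSome then θ i 0 else 0 := by
  unfold qualOf
  rcases m i with _ | j <;> simp [Fin.fin_one_eq_zero]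

end OneProvider

section StarInstance

variable (n : ℕ) {p : ℝ}

def starQuality : Fin (n + 1) → Fin 1 → ℝ := fun i _ => if i = 0 then 1 else 0

def starOffer : Fin (n + 1) → Fin 1 → Bool := fun i _ => decide (i = 0)

lemma sum_qualOf_starQuality (m : Fin (n + 1) → Option (Fin 1)) :
    ∑ i, qualOf (starQuality n) m i = if (m 0).isSome then 1 else 0 := by
  rw [sum_eq_single 0 (fun i _ hi => by simp [qualOf_fin_one, starQuality, hi]) (by simp)]
  simp [qualOf_fin_one, starQuality]

lemma MQ_starQuality (X : Fin (n + 1) → Fin 1 → Bool) :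
    MQ (n + 1) 1 p (starQuality n) X =
      1 / (n + 1 : ℝ) * (1 / (n + 1).factorial * ∑ σ : Equiv.Perm (Fin (n + 1)),
        ∑ c : Fin (n + 1) → Bool, coinWt (n + 1) p c *
          if (matchesOf (n + 1) 1 (starQuality n) X σ c 0).isSome then 1 else 0) := by
  simp only [MQ, sum_qualOf_starQuality, mul_sum]
  push_cast
  exact sum_congr rfl fun _ _ => sum_congr rfl fun _ _ => by ring

lemma MQ_starOffer : MQ (n + 1) 1 p (starQuality n) (starOffer n) = p / (n + 1) := by
  have hmatched : ∀ σ c, (matchesOf (n + 1) 1 (starQuality n) (starOffer n) σ c 0).isSome ↔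
      c 0 = true ∧ ∀ i ∈ (∅ : Finset (Fin (n + 1))), c i = false := by
    intro σ c
    simp only [isSome_matchesOf_one_provider, starOffer]
    simp +contextual [← Equiv.eq_symm_apply, ne_of_lt]
  simp only [MQ_starQuality, hmatched, sum_coinWt_mul_indicator p (notMem_empty 0)]
  rw [card_empty, pow_zero, mul_one, sum_const, card_univ, Fintype.card_perm, Fintype.card_fin,
    nsmul_eq_mul]
  field_simp

lemma MQ_greedy_starQuality_le (hp1 : p ≤ 1) :
    MQ (n + 1) 1 p (starQuality n) (fun _ _ => true) ≤ 1 / (n + 1) ^ 2 := by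
  have hmatched : ∀ σ c,
      (matchesOf (n + 1) 1 (starQuality n) (fun _ _ => true) σ c 0).isSome ↔
        c 0 = true ∧ ∀ i ∈ (Iio (σ.symm 0)).map σ.toEmbedding, c i = false := by
    intro σ c
    simp only [isSome_matchesOf_one_provider, forall_mem_map, mem_Iio, and_true,
      Bool.not_eq_true, Equiv.coe_toEmbedding, true_and]
  have hfirst : ∀ σ : Equiv.Perm (Fin (n + 1)), 0 ∉ (Iio (σ.symm 0)).map σ.toEmbedding := by
    simp
  simp only [MQ_starQuality, hmatched, sum_coinWt_mul_indicator p (hfirst _), card_map,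
    Fin.card_Iio]
  rw [sum_perm_symm_apply_zero fun j => p * (1 - p) ^ (j : ℕ), ← mul_sum]
  set q := p * ∑ j : Fin (n + 1), (1 - p) ^ (j : ℕ)
  calc 1 / (n + 1 : ℝ) * (1 / (n + 1).factorial * (n.factorial * q)) = q / (n + 1) ^ 2 := by
        rw [Nat.factorial_succ]
        push_cast
        field_simp
    _ ≤ 1 / (n + 1) ^ 2 := by gcongr; exact mul_sum_one_sub_pow_le_one hp1 _

end StarInstance

/-- For every `p ∈ (0,1]` and every `ε > 0`, there exist `N`, `M` and a match quality
matrix `θ ∈ [0,1]^{N×M}` such that the greedy policy (offering all providers to all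
patients) attains expected match quality at most `ε` times that of the optimal
match-quality policy — where the optimum (taken over all 0-1 assortments) is moreover
strictly positive, so the bound is not vacuous. -/
theorem greedy_arbitrarily_bad (p : ℝ) (hp0 : 0 < p) (hp1 : p ≤ 1) (ε : ℝ) (hε : 0 < ε) :
    ∃ (N M : ℕ) (_ : 0 < N) (θ : Fin N → Fin M → ℝ),
      (∀ i j, θ i j ∈ Set.Icc (0 : ℝ) 1) ∧
      0 < (⨆ X : Fin N → Fin M → Bool, MQ N M p θ X) ∧
      MQ N M p θ (fun _ _ => true) ≤ ε * ⨆ X : Fin N → Fin M → Bool, MQ N M p θ X := by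
  obtain ⟨n, hn⟩ := exists_nat_ge (1 / (ε * p))
  have hlarge : 1 ≤ ε * p * (n + 1) := by
    rw [div_le_iff₀ (by positivity)] at hn
    linarith [mul_pos hε hp0]
  have hopt : MQ (n + 1) 1 p (starQuality n) (starOffer n) ≤
      ⨆ X : Fin (n + 1) → Fin 1 → Bool, MQ (n + 1) 1 p (starQuality n) X :=
    le_ciSup (Set.finite_range _).bddAbove _
  refine ⟨n + 1, 1, n.succ_pos, starQuality n, fun i j => ?_, ?_, ?_⟩
  · unfold starQuality
    split_ifs <;> simp
  · refine lt_of_lt_of_le ?_ hopt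
    rw [MQ_starOffer]
    positivity
  · calc MQ (n + 1) 1 p (starQuality n) (fun _ _ => true)
        ≤ 1 / (n + 1) ^ 2 := MQ_greedy_starQuality_le n hp1
      _ ≤ ε * (p / (n + 1)) := by
        rw [div_le_iff₀ (by positivity)]
        field_simp
        linarith
      _ ≤ ε * ⨆ X : Fin (n + 1) → Fin 1 → Bool, MQ (n + 1) 1 p (starQuality n) X := by
        rw [← MQ_starOffer]
        gcongr

end
end
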